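/- Every counter system whose step relation 𝒯 consists exactly of the disjunctive-guard steps induced by a finite set of disjunctive-guard transitions is fully ≼₀-compatible. -/
import Mathlib


namespace CS01

variable {C Q A : Type*}

/-- Configurations of a counter system: a controller state and a counter vector. -/
abbrev Conf (C Q : Type*) := C × (Q → ℕ)

/-- The order `≼₀`: same controller state, pointwise smaller counters,
and the same zero pattern. -/
def Le0 (x y : Conf C Q) : Prop :=
  x.1 = y.1 ∧ (∀ q, x.2 q ≤ y.2 q) ∧ ∀ q, (x.2 q = 0 ↔ y.2 q = 0)

/-- The product order `≼₀ × ≼₀` on pairs of configurations. -/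
def ProdLe0 (s t : Conf C Q × Conf C Q) : Prop :=
  Le0 s.1 t.1 ∧ Le0 s.2 t.2

/-- The abstraction `α`, mapping a configuration to its 01-abstraction. -/
def alpha (x : Conf C Q) : Conf C Q :=
  (x.1, fun q => if x.2 q = 0 then 0 else 1)

/-- Forward `≼₀`-compatibility of a step relation. -/
def FwdCompat (T : Set (Conf C Q × Conf C Q)) : Prop :=
  ∀ x y d, (x, y) ∈ T → Le0 x d → ∃ d', (d, d') ∈ T ∧ Le0 y d'

/-- Backward `≼₀`-compatibility of a step relation. -/
def BwdCompat (T : Set (Conf C Q × Conf C Q)) : Prop :=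
  ∀ x y d', (x, y) ∈ T → Le0 y d' → ∃ d, (d, d') ∈ T ∧ Le0 x d

/-- Steps of a counter system are size-preserving. -/
def SizePreserving [Fintype Q] (T : Set (Conf C Q × Conf C Q)) : Prop :=
  ∀ t ∈ T, ∑ q, t.1.2 q = ∑ q, t.2.2 q

/-- A step of the 01-counter system `𝒞_α`. -/
def AbsStep (T : Set (Conf C Q × Conf C Q)) (x' y' : Conf C Q) : Prop :=
  ∃ t ∈ T, alpha t.1 = x' ∧ alpha t.2 = y'

/-- A finite run of the counter system, starting in an initial configuration. -/
def IsRun (T : Set (Conf C Q × Conf C Q)) (c0 : C) (Q0 : Set Q)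
    {n : ℕ} (ρ : Fin (n + 1) → Conf C Q) : Prop :=
  (ρ 0).1 = c0 ∧ (∀ q ∉ Q0, (ρ 0).2 q = 0) ∧
    ∀ i : Fin n, (ρ i.castSucc, ρ i.succ) ∈ T

/-- A finite run of the 01-counter system, starting in an initial (0/1-valued)
abstract configuration. -/
def IsAbsRun (T : Set (Conf C Q × Conf C Q)) (c0 : C) (Q0 : Set Q)
    {n : ℕ} (σ : Fin (n + 1) → Conf C Q) : Prop :=
  (σ 0).1 = c0 ∧ (∀ q, (σ 0).2 q ≤ 1) ∧ (∀ q ∉ Q0, (σ 0).2 q = 0) ∧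
    ∀ i : Fin n, AbsStep T (σ i.castSucc) (σ i.succ)

/-- Reachability in the counter system. -/
def Reach (T : Set (Conf C Q × Conf C Q)) (c0 : C) (Q0 : Set Q)
    (x : Conf C Q) : Prop :=
  ∃ (n : ℕ) (ρ : Fin (n + 1) → Conf C Q), IsRun T c0 Q0 ρ ∧ ρ (Fin.last n) = x

/-- Reachability in the 01-counter system. -/
def AbsReach (T : Set (Conf C Q × Conf C Q)) (c0 : C) (Q0 : Set Q)
    (x : Conf C Q) : Prop :=
  ∃ (n : ℕ) (σ : Fin (n + 1) → Conf C Q), IsAbsRun T c0 Q0 σ ∧ σ (Fin.last n) = x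

/-- The counter vector obtained when `i` processes move from `p` to `p'`. -/
def moveN [DecidableEq Q] (v : Q → ℕ) (p p' : Q) (i : ℕ) : Q → ℕ :=
  fun q => v q - (if q = p then i else 0) + (if q = p' then i else 0)

/-- A configuration satisfies a disjunctive guard `G ⊆ C ⊕ Q`. -/
def SatG (x : Conf C Q) (G : Set (C ⊕ Q)) : Prop :=
  Sum.inl x.1 ∈ G ∨ ∃ q, Sum.inr q ∈ G ∧ 1 ≤ x.2 q

/-- A disjunctive-guard step induced by controller transitions `ΔC` and user
transitions `ΔQ`: either the controller takes a guarded transition, or `i ≥ 1`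
user processes take the same guarded transition; the guard must be satisfied
in the source and in the target configuration. -/
def DGStep [DecidableEq Q] (ΔC : Set (C × Set (C ⊕ Q) × C))
    (ΔQ : Set (Q × Set (C ⊕ Q) × Q)) (x y : Conf C Q) : Prop :=
  (∃ G, (x.1, G, y.1) ∈ ΔC ∧ y.2 = x.2 ∧ SatG x G ∧ SatG y G) ∨
  (∃ p G p' i, 1 ≤ i ∧ (p, G, p') ∈ ΔQ ∧ y.1 = x.1 ∧ i ≤ x.2 p ∧
    y.2 = moveN x.2 p p' i ∧ SatG x G ∧ SatG y G)

/-- Every counter system whose steps are exactly the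
disjunctive-guard steps induced by a finite set of disjunctive-guard
transitions is fully `≼₀`-compatible. -/
lemma le0_mono_sat {x y : Conf C Q} (h : Le0 x y) {G : Set (C ⊕ Q)}
    (hs : SatG x G) : SatG y G := by
  obtain ⟨h1, h2, -⟩ := h
  rcases hs with hc | ⟨q, hq, hq1⟩
  · exact Or.inl (h1 ▸ hc)
  · exact Or.inr ⟨q, hq, le_trans hq1 (h2 q)⟩

theorem stmt4 [Fintype C] [Fintype Q] [Nonempty C] [Nonempty Q] [DecidableEq Q]
    (ΔC : Set (C × Set (C ⊕ Q) × C)) (ΔQ : Set (Q × Set (C ⊕ Q) × Q))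
    (T : Set (Conf C Q × Conf C Q))
    (hT : ∀ x y : Conf C Q, (x, y) ∈ T ↔ DGStep ΔC ΔQ x y) :
    FwdCompat T ∧ BwdCompat T := by
  constructor
  · -- forward compatibility
    intro x y d hxy hxd
    obtain ⟨hcd, hle, hz⟩ := hxd
    rcases (hT x y).mp hxy with ⟨G, hΔ, hy2, hSx, hSy⟩ |
        ⟨p, G, p', i, hi, hΔ, hy1, hix, hy2, hSx, hSy⟩
    · -- controller step
      have hLe : Le0 y (y.1, d.2) :=
        ⟨rfl, fun q => by simp only [hy2]; exact hle q,
          fun q => by simp only [hy2]; exact hz q⟩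
      refine ⟨(y.1, d.2), ?_, hLe⟩
      exact (hT _ _).mpr (Or.inl ⟨G, by rw [← hcd]; exact hΔ, rfl,
        le0_mono_sat ⟨hcd, hle, hz⟩ hSx, le0_mono_sat hLe hSy⟩)
    · by_cases hpp : p = p'
      · -- trivial self-loop user step
        subst hpp
        have hyx : y.2 = x.2 := by
          funext q; rw [hy2]; simp only [moveN]
          split_ifs with h
          · rw [h]; omega
          · omega
        have hld : i ≤ d.2 p := le_trans hix (hle p)
        have hLe : Le0 y (x.1, d.2) :=
          ⟨hy1, fun q => hyx ▸ hle q, fun q => hyx ▸ hz q⟩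
        refine ⟨(x.1, d.2), ?_, hLe⟩
        refine (hT _ _).mpr (Or.inr ⟨p, G, p, i, hi, hΔ, hcd, hld, ?_,
          le0_mono_sat ⟨hcd, hle, hz⟩ hSx, le0_mono_sat hLe hSy⟩)
        funext q
        show d.2 q = moveN d.2 p p i q
        simp only [moveN]
        split_ifs with h
        · rw [h]; omega
        · omega
      · -- genuine user step, p ≠ p'
        have hyp : y.2 p = x.2 p - i := by rw [hy2]; simp [moveN, hpp]
        have hyp' : y.2 p' = x.2 p' + i := by
          rw [hy2]; simp [moveN, Ne.symm hpp]
        have hyq : ∀ q, q ≠ p → q ≠ p' → y.2 q = x.2 q := by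
          intro q h1 h2; rw [hy2]; simp [moveN, h1, h2]
        set j := if x.2 p = i then d.2 p else i with hjdef
        have hjcase : (x.2 p = i ∧ j = d.2 p) ∨ (x.2 p ≠ i ∧ j = i) := by
          rw [hjdef]; split_ifs with h
          · exact Or.inl ⟨h, rfl⟩
          · exact Or.inr ⟨h, rfl⟩
        have hlp := hle p; have hlp' := hle p'
        have hzp := hz p; have hzp' := hz p'
        have hj1 : 1 ≤ j := by omega
        have hjd : j ≤ d.2 p := by omega
        have hdp : moveN d.2 p p' j p = d.2 p - j := by simp [moveN, hpp]
        have hdp' : moveN d.2 p p' j p' = d.2 p' + j := by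
          simp [moveN, Ne.symm hpp]
        have hdq : ∀ q, q ≠ p → q ≠ p' → moveN d.2 p p' j q = d.2 q := by
          intro q h1 h2; simp [moveN, h1, h2]
        have key : ∀ q, y.2 q ≤ moveN d.2 p p' j q ∧
            (y.2 q = 0 ↔ moveN d.2 p p' j q = 0) := by
          intro q
          by_cases h1 : q = p
          · rw [h1, hyp, hdp]; omega
          · by_cases h2 : q = p'
            · rw [h2, hyp', hdp']; omega
            · rw [hyq q h1 h2, hdq q h1 h2]
              have := hle q; have := hz q; omega
        have hLe : Le0 y (y.1, moveN d.2 p p' j) :=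
          ⟨rfl, fun q => (key q).1, fun q => (key q).2⟩
        refine ⟨(y.1, moveN d.2 p p' j), ?_, hLe⟩
        refine (hT _ _).mpr (Or.inr ⟨p, G, p', j, hj1, hΔ, ?_, hjd, rfl,
          le0_mono_sat ⟨hcd, hle, hz⟩ hSx, le0_mono_sat hLe hSy⟩)
        show y.1 = d.1
        rw [hy1, hcd]
  · -- backward compatibility
    intro x y d' hxy hyd'
    obtain ⟨hcd, hle, hz⟩ := hyd'
    rcases (hT x y).mp hxy with ⟨G, hΔ, hy2, hSx, hSy⟩ |
        ⟨p, G, p', i, hi, hΔ, hy1, hix, hy2, hSx, hSy⟩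
    · -- controller step
      have hLe : Le0 x (x.1, d'.2) :=
        ⟨rfl, fun q => by rw [← congrFun hy2 q]; exact hle q,
          fun q => by rw [← congrFun hy2 q]; exact hz q⟩
      refine ⟨(x.1, d'.2), ?_, hLe⟩
      refine (hT _ _).mpr (Or.inl ⟨G, ?_, rfl, le0_mono_sat hLe hSx,
        le0_mono_sat ⟨hcd, hle, hz⟩ hSy⟩)
      show (x.1, G, d'.1) ∈ ΔC
      rw [← hcd]; exact hΔ
    · by_cases hpp : p = p'
      · -- trivial self-loop user step
        subst hpp
        have hyx : y.2 = x.2 := by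
          funext q; rw [hy2]; simp only [moveN]
          split_ifs with h
          · rw [h]; omega
          · omega
        have hld : i ≤ d'.2 p := by
          have h1 := hle p; rw [hyx] at h1; omega
        have hLe : Le0 x (x.1, d'.2) :=
          ⟨rfl, fun q => hyx ▸ hle q, fun q => hyx ▸ hz q⟩
        refine ⟨(x.1, d'.2), ?_, hLe⟩
        refine (hT _ _).mpr (Or.inr ⟨p, G, p, i, hi, hΔ, ?_, hld, ?_,
          le0_mono_sat hLe hSx, le0_mono_sat ⟨hcd, hle, hz⟩ hSy⟩)
        · show d'.1 = x.1
          rw [← hcd, hy1]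
        · funext q
          show d'.2 q = moveN d'.2 p p i q
          simp only [moveN]
          split_ifs with h
          · rw [h]; omega
          · omega
      · -- genuine user step, p ≠ p'
        have hyp : y.2 p = x.2 p - i := by rw [hy2]; simp [moveN, hpp]
        have hyp' : y.2 p' = x.2 p' + i := by
          rw [hy2]; simp [moveN, Ne.symm hpp]
        have hyq : ∀ q, q ≠ p → q ≠ p' → y.2 q = x.2 q := by
          intro q h1 h2; rw [hy2]; simp [moveN, h1, h2]
        set j := if x.2 p' = 0 then d'.2 p' else i with hjdef
        have hjcase : (x.2 p' = 0 ∧ j = d'.2 p') ∨ (x.2 p' ≠ 0 ∧ j = i) := by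
          rw [hjdef]; split_ifs with h
          · exact Or.inl ⟨h, rfl⟩
          · exact Or.inr ⟨h, rfl⟩
        have hlp := hle p; have hlp' := hle p'
        have hzp := hz p; have hzp' := hz p'
        have hj1 : 1 ≤ j := by omega
        have hjd' : j ≤ d'.2 p' := by omega
        have hdp : moveN d'.2 p' p j p = d'.2 p + j := by
          simp [moveN, hpp]
        have hdp' : moveN d'.2 p' p j p' = d'.2 p' - j := by
          simp [moveN, Ne.symm hpp]
        have hdq : ∀ q, q ≠ p → q ≠ p' → moveN d'.2 p' p j q = d'.2 q := by
          intro q h1 h2; simp [moveN, h1, h2]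
        have key : ∀ q, x.2 q ≤ moveN d'.2 p' p j q ∧
            (x.2 q = 0 ↔ moveN d'.2 p' p j q = 0) := by
          intro q
          by_cases h1 : q = p
          · rw [h1, hdp]; omega
          · by_cases h2 : q = p'
            · rw [h2, hdp']; omega
            · rw [hdq q h1 h2]
              have := hle q; have := hz q; have := hyq q h1 h2; omega
        have hLe : Le0 x (x.1, moveN d'.2 p' p j) :=
          ⟨rfl, fun q => (key q).1, fun q => (key q).2⟩
        refine ⟨(x.1, moveN d'.2 p' p j), ?_, hLe⟩
        refine (hT _ _).mpr (Or.inr ⟨p, G, p', j, hj1, hΔ, ?_, ?_, ?_,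
          le0_mono_sat hLe hSx, le0_mono_sat ⟨hcd, hle, hz⟩ hSy⟩)
        · show d'.1 = x.1
          rw [← hcd, hy1]
        · show j ≤ moveN d'.2 p' p j p
          rw [hdp]; omega
        · funext q
          show d'.2 q = moveN (moveN d'.2 p' p j) p p' j q
          by_cases h1 : q = p
          · have e1 : moveN (moveN d'.2 p' p j) p p' j p
                = moveN d'.2 p' p j p - j := by simp [moveN, hpp]
            rw [h1, e1, hdp]; omega
          · by_cases h2 : q = p'
            · have e2 : moveN (moveN d'.2 p' p j) p p' j p'
                  = moveN d'.2 p' p j p' + j := by simp [moveN, Ne.symm hpp]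
              rw [h2, e2, hdp']; omega
            · have e3 : moveN (moveN d'.2 p' p j) p p' j q
                  = moveN d'.2 p' p j q := by simp [moveN, h1, h2]
              rw [e3, hdq q h1 h2]

end CS01
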